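/- arXiv:math/0211253 — 3 statements merged into one kernel-verified Lean document; each statement's English description precedes it below -/
import Mathlib

section
/- Suppose n ≥ 2 and 0 ≤ m_1 < k, and set p = k − m_1. Then dim ker f_{k,m} ≤ Σ_{q=p}^{k} dim ker f_{q,m^1}, where for each q the map f_{q,m^1} : V'_{q−1} → V'_q is the analogous map built from the (n−1)-tuple m^1 = (m_2,…,m_n). -/
open Finsupp

/-- Multiindices `J : Fin n → ℕ` of total degree `j`. -/
abbrev MIdx (n j : ℕ) : Type := {J : Fin n → ℕ // ∑ i, J i = j}

/-- The complex vector space `V_j` with basis `{e_J : |J| = j}`. -/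
abbrev V (n j : ℕ) : Type := MIdx n j →₀ ℂ

/-- `J + 1ᵢ` : the multiindex `J` with its `i`-th entry increased by 1. -/
def incr {n : ℕ} (J : Fin n → ℕ) (i : Fin n) : Fin n → ℕ :=
  Function.update J i (J i + 1)

lemma sum_incr {n : ℕ} (J : Fin n → ℕ) (i : Fin n) :
    ∑ x, incr J i x = (∑ x, J x) + 1 := by
  unfold incr
  rw [Finset.sum_update_of_mem (Finset.mem_univ i),
    Finset.sum_eq_sum_sdiff_singleton_add (Finset.mem_univ i) J]
  ring

/-- The map `f_{j+1,m} : V_j → V_{j+1}`, `e_J ↦ ∑ᵢ (jᵢ+1)(mᵢ−jᵢ) e_{J+1ᵢ}`. -/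
noncomputable def fMap (n : ℕ) (m : Fin n → ℕ) (j : ℕ) : V n j →ₗ[ℂ] V n (j + 1) :=
  Finsupp.lift (V n (j + 1)) ℂ (MIdx n j) fun J =>
    ∑ i, (((J.1 i : ℂ) + 1) * ((m i : ℂ) - (J.1 i : ℂ))) •
      Finsupp.single (⟨incr J.1 i, by rw [sum_incr, J.2]⟩ : MIdx n (j + 1)) (1 : ℂ)

/-- `d(m,j)`: the number of multiindices `J` with `J i ≤ m i` for all `i` and `|J| = j`. -/
noncomputable def dCount (n : ℕ) (m : Fin n → ℕ) (j : ℤ) : ℕ :=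
  Set.ncard {J : Fin n → ℕ | (∀ i, J i ≤ m i) ∧ ∑ i, (J i : ℤ) = j}

/-- `w(m,j) = d(m,j) − d(m,j−1)`. -/
noncomputable def w (n : ℕ) (m : Fin n → ℕ) (j : ℤ) : ℤ :=
  (dCount n m j : ℤ) - (dCount n m (j - 1) : ℤ)

instance MIdx.finite (n j : ℕ) : Finite (MIdx n j) := by
  apply Finite.of_injective (fun J : MIdx n j => fun i => (⟨J.1 i, by
    have := Finset.single_le_sum (f := J.1) (fun i _ => Nat.zero_le _) (Finset.mem_univ i)
    omega⟩ : Fin (j+1)))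
  intro J K h
  ext i
  exact congrArg Fin.val (congrFun h i)

lemma MIdx.fst_le {n j : ℕ} (J : MIdx (n+1) j) : J.1 0 ≤ j := by
  have := Finset.single_le_sum (f := J.1) (fun i _ => Nat.zero_le _) (Finset.mem_univ 0)
  omega

def cns {n : ℕ} (a : ℕ) {d j : ℕ} (h : a + d = j) (J : MIdx n d) : MIdx (n+1) j :=
  ⟨Fin.cons a J.1, by rw [Fin.sum_cons, J.2, h]⟩

lemma cns_injective {n : ℕ} (a : ℕ) {d j : ℕ} (h : a + d = j) :
    Function.Injective (cns (n := n) a h) := by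
  intro J K hJK
  have h2 := congrArg Subtype.val hJK
  simp only [cns] at h2
  exact Subtype.ext (Fin.cons_right_injective _ h2)

noncomputable def proj {n : ℕ} (a : ℕ) {d j : ℕ} (h : a + d = j) : V (n+1) j →ₗ[ℂ] V n d :=
  Finsupp.lcomapDomain (cns a h) (cns_injective a h)

lemma proj_apply {n : ℕ} (a : ℕ) {d j : ℕ} (h : a + d = j) (x : V (n+1) j) (J : MIdx n d) :
    proj a h x J = x (cns a h J) := rfl

lemma tail_sum {n j : ℕ} (K : MIdx (n+1) j) : ∑ i, Fin.tail K.1 i = j - K.1 0 := by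
  have h1 := K.2
  rw [Fin.sum_univ_succ] at h1
  have h2 : ∑ i, Fin.tail K.1 i = ∑ i : Fin n, K.1 i.succ := rfl
  omega

lemma proj_single_eq {n : ℕ} (a : ℕ) {d j : ℕ} (h : a + d = j) (K : MIdx (n+1) j) (b : ℂ)
    (T : MIdx n d) (hT : K.1 = Fin.cons a T.1) :
    proj a h (single K b) = single T b := by
  have hK : cns a h T = K := Subtype.ext hT.symm
  ext J'
  rw [proj_apply, single_apply, single_apply]
  by_cases hJ : T = J'
  · subst hJ
    rw [if_pos hK.symm, if_pos rfl]
  · rw [if_neg, if_neg hJ]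
    intro hc
    exact hJ (cns_injective a h (hK.trans hc))

lemma proj_single_ne {n : ℕ} (a : ℕ) {d j : ℕ} (h : a + d = j) (K : MIdx (n+1) j) (b : ℂ)
    (hK : K.1 0 ≠ a) : proj a h (single K b) = 0 := by
  ext J'
  rw [proj_apply, single_apply, if_neg, Finsupp.coe_zero, Pi.zero_apply]
  intro hc
  exact hK (by rw [hc]; rfl)

lemma fMap_single {N : ℕ} (m : Fin N → ℕ) (j : ℕ) (J : MIdx N j) :
    fMap N m j (single J 1) =
      ∑ i, (((J.1 i : ℂ) + 1) * ((m i : ℂ) - (J.1 i : ℂ))) •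
        Finsupp.single (⟨incr J.1 i, by rw [sum_incr, J.2]⟩ : MIdx N (j + 1)) (1 : ℂ) := by
  unfold fMap
  rw [Finsupp.lift_apply, Finsupp.sum_single_index, one_smul]
  rw [zero_smul]

lemma incr_zero_apply_zero {n : ℕ} (J : Fin (n+1) → ℕ) : incr J 0 0 = J 0 + 1 :=
  Function.update_self _ _ _

lemma incr_succ_apply_zero {n : ℕ} (J : Fin (n+1) → ℕ) (i : Fin n) :
    incr J i.succ 0 = J 0 :=
  Function.update_of_ne (Fin.succ_ne_zero i).symm _ _

lemma tail_incr_zero {n : ℕ} (J : Fin (n+1) → ℕ) : Fin.tail (incr J 0) = Fin.tail J :=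
  Fin.tail_update_zero _ _

lemma tail_incr_succ {n : ℕ} (J : Fin (n+1) → ℕ) (i : Fin n) :
    Fin.tail (incr J i.succ) = incr (Fin.tail J) i := by
  unfold incr
  rw [Fin.tail_update_succ]
  rfl

lemma key1 {n : ℕ} (m : Fin (n+1) → ℕ) (j b d : ℕ)
    (h : (b+1) + (d+1) = j+1) (h₂ : b + (d+1) = j) (h₃ : (b+1) + d = j) :
    (proj (b+1) h).comp (fMap (n+1) m j) =
      (((b:ℂ)+1) * ((m 0 : ℂ) - (b:ℂ))) • proj b h₂
        + (fMap n (Fin.tail m) d).comp (proj (b+1) h₃) := by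
  ext J : 2
  show (proj (b+1) h) (fMap (n+1) m j (single J 1)) =
    (((b:ℂ)+1) * ((m 0 : ℂ) - (b:ℂ))) • proj b h₂ (single J 1)
      + fMap n (Fin.tail m) d (proj (b+1) h₃ (single J 1))
  rw [fMap_single, map_sum, Fin.sum_univ_succ]
  simp only [map_smul]
  rcases eq_or_ne (J.1 0) (b+1) with hb | hb
  · -- J₀ = b+1 : only the succ terms survive, giving the fMap term
    rw [proj_single_ne (b+1) h _ _
      (show incr J.1 0 0 ≠ b+1 by rw [incr_zero_apply_zero]; omega), smul_zero, zero_add,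
      proj_single_ne b h₂ _ _ (show J.1 0 ≠ b by omega), smul_zero, zero_add,
      proj_single_eq (b+1) h₃ _ _ (⟨Fin.tail J.1, by rw [tail_sum, hb]; omega⟩ : MIdx n d)
        (show J.1 = Fin.cons (b+1) (Fin.tail J.1) by
          rw [← hb]; exact (Fin.cons_self_tail J.1).symm),
      fMap_single]
    apply Finset.sum_congr rfl
    intro i _
    have hT : incr J.1 i.succ = Fin.cons (b+1) (incr (Fin.tail J.1) i) := by
      conv_lhs => rw [← Fin.cons_self_tail (incr J.1 i.succ)]
      rw [incr_succ_apply_zero, hb, tail_incr_succ]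
    rw [proj_single_eq (b+1) h _ _
      (⟨incr (Fin.tail J.1) i, by rw [sum_incr, tail_sum, hb]; omega⟩ : MIdx n (d+1)) hT]
    rfl
  · rcases eq_or_ne (J.1 0) b with hb' | hb'
    · -- J₀ = b : only the i = 0 term survives, giving the scalar term
      rw [proj_single_eq (b+1) h _ _
        (⟨Fin.tail J.1, by rw [tail_sum, hb']; omega⟩ : MIdx n (d+1))
        (show incr J.1 0 = Fin.cons (b+1) (Fin.tail J.1) by
          conv_lhs => rw [← Fin.cons_self_tail (incr J.1 0)]
          rw [incr_zero_apply_zero, hb', tail_incr_zero]),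
        proj_single_eq b h₂ _ _ (⟨Fin.tail J.1, by rw [tail_sum, hb']; omega⟩ : MIdx n (d+1))
          (show J.1 = Fin.cons b (Fin.tail J.1) by
            rw [← hb']; exact (Fin.cons_self_tail J.1).symm),
        proj_single_ne (b+1) h₃ _ _ hb, map_zero, add_zero]
      have hcast : ((J.1 0 : ℕ) : ℂ) = (b : ℂ) := by rw [hb']
      rw [hcast]
      have : ∀ i : Fin n, proj (b+1) h (single (⟨incr J.1 i.succ, by
          rw [sum_incr, J.2]⟩ : MIdx (n+1) (j+1)) (1:ℂ)) = 0 := fun i =>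
        proj_single_ne _ _ _ _ (show incr J.1 i.succ 0 ≠ b+1 by
          rw [incr_succ_apply_zero]; omega)
      simp only [this, smul_zero, Finset.sum_const_zero, add_zero]
    · -- J₀ ∉ {b, b+1} : everything vanishes
      rw [proj_single_ne (b+1) h _ _
          (show incr J.1 0 0 ≠ b+1 by rw [incr_zero_apply_zero]; omega), smul_zero, zero_add,
        proj_single_ne b h₂ _ _ hb', smul_zero, zero_add,
        proj_single_ne (b+1) h₃ _ _ hb, map_zero]
      apply Finset.sum_eq_zero
      intro i _
      rw [proj_single_ne (b+1) h _ _
        (show incr J.1 i.succ 0 ≠ b+1 by rw [incr_succ_apply_zero]; omega), smul_zero]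

lemma key0 {n : ℕ} (m : Fin (n+1) → ℕ) (j d : ℕ)
    (h : 0 + (d+1) = j+1) (h₃ : 0 + d = j) :
    (proj 0 h).comp (fMap (n+1) m j) = (fMap n (Fin.tail m) d).comp (proj 0 h₃) := by
  ext J : 2
  show (proj 0 h) (fMap (n+1) m j (single J 1)) =
    fMap n (Fin.tail m) d (proj 0 h₃ (single J 1))
  rw [fMap_single, map_sum, Fin.sum_univ_succ]
  simp only [map_smul]
  rw [proj_single_ne 0 h _ _ (show incr J.1 0 0 ≠ 0 by rw [incr_zero_apply_zero]; omega),
    smul_zero, zero_add]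
  rcases eq_or_ne (J.1 0) 0 with hb | hb
  · rw [proj_single_eq 0 h₃ _ _ (⟨Fin.tail J.1, by rw [tail_sum, hb]; omega⟩ : MIdx n d)
      (show J.1 = Fin.cons 0 (Fin.tail J.1) by
        rw [← hb]; exact (Fin.cons_self_tail J.1).symm), fMap_single]
    apply Finset.sum_congr rfl
    intro i _
    have hT : incr J.1 i.succ = Fin.cons 0 (incr (Fin.tail J.1) i) := by
      conv_lhs => rw [← Fin.cons_self_tail (incr J.1 i.succ)]
      rw [incr_succ_apply_zero, hb, tail_incr_succ]
    rw [proj_single_eq 0 h _ _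
      (⟨incr (Fin.tail J.1) i, by rw [sum_incr, tail_sum, hb]; omega⟩ : MIdx n (d+1)) hT]
    rfl
  · rw [proj_single_ne 0 h₃ _ _ hb, map_zero]
    apply Finset.sum_eq_zero
    intro i _
    rw [proj_single_ne 0 h _ _
      (show incr J.1 i.succ 0 ≠ 0 by rw [incr_succ_apply_zero]; omega), smul_zero]

lemma keyTop {n : ℕ} (m : Fin (n+1) → ℕ) (b : ℕ)
    (h : (b+1) + 0 = b+1) (h₂ : b + 0 = b) :
    (proj (b+1) h).comp (fMap (n+1) m b) =
      (((b:ℂ)+1) * ((m 0 : ℂ) - (b:ℂ))) • proj b h₂ := by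
  ext J : 2
  show (proj (b+1) h) (fMap (n+1) m b (single J 1)) =
    (((b:ℂ)+1) * ((m 0 : ℂ) - (b:ℂ))) • proj b h₂ (single J 1)
  rw [fMap_single, map_sum, Fin.sum_univ_succ]
  simp only [map_smul]
  have hle := MIdx.fst_le J
  rcases eq_or_ne (J.1 0) b with hb | hb
  · rw [proj_single_eq (b+1) h _ _ (⟨Fin.tail J.1, by rw [tail_sum, hb]; omega⟩ : MIdx n 0)
      (show incr J.1 0 = Fin.cons (b+1) (Fin.tail J.1) by
        conv_lhs => rw [← Fin.cons_self_tail (incr J.1 0)]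
        rw [incr_zero_apply_zero, hb, tail_incr_zero]),
      proj_single_eq b h₂ _ _ (⟨Fin.tail J.1, by rw [tail_sum, hb]; omega⟩ : MIdx n 0)
        (show J.1 = Fin.cons b (Fin.tail J.1) by
          have hcons : Fin.cons b (Fin.tail J.1) = Fin.cons (J.1 0) (Fin.tail J.1) := by
            rw [hb]
          rw [hcons]; exact (Fin.cons_self_tail J.1).symm)]
    have hcast : ((J.1 0 : ℕ) : ℂ) = (b : ℂ) := by rw [hb]
    rw [hcast]
    have hz : ∀ i : Fin n, proj (b+1) h (single (⟨incr J.1 i.succ, by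
        rw [sum_incr, J.2]⟩ : MIdx (n+1) (b+1)) (1:ℂ)) = 0 := fun i =>
      proj_single_ne _ _ _ _ (show incr J.1 i.succ 0 ≠ b+1 by
        rw [incr_succ_apply_zero]; omega)
    simp only [hz, smul_zero, Finset.sum_const_zero, add_zero]
  · rw [proj_single_ne (b+1) h _ _
      (show incr J.1 0 0 ≠ b+1 by rw [incr_zero_apply_zero]; omega), smul_zero, zero_add,
      proj_single_ne b h₂ _ _ hb, smul_zero]
    apply Finset.sum_eq_zero
    intro i _
    rw [proj_single_ne (b+1) h _ _
      (show incr J.1 i.succ 0 ≠ b+1 by rw [incr_succ_apply_zero]; omega), smul_zero]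

lemma proj_zero_congr {n j a d d' : ℕ} (pf : a + d = j) (pf' : a + d' = j) {x : V (n+1) j}
    (hx : proj a pf x = 0) : proj a pf' x = 0 := by
  have hd : d = d' := by omega
  subst hd
  exact hx

lemma proj_congr_left {n j a a' d : ℕ} (h : a = a') (pf : a + d = j) (pf' : a' + d = j) :
    proj (n := n) a pf = proj a' pf' := by
  subst h
  rfl

lemma eq_zero_of_proj {n j : ℕ} (x : V (n+1) j)
    (hx : ∀ a (pf : a + (j - a) = j), proj a pf x = 0) : x = 0 := by
  ext K
  have h0 := MIdx.fst_le K
  have hp := hx (K.1 0) (by omega)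
  have hKT : cns (K.1 0) (show K.1 0 + (j - K.1 0) = j by omega)
      ⟨Fin.tail K.1, tail_sum K⟩ = K := Subtype.ext (Fin.cons_self_tail K.1)
  have hval := proj_apply (K.1 0) (show K.1 0 + (j - K.1 0) = j by omega) x
    ⟨Fin.tail K.1, tail_sum K⟩
  rw [hKT, hp] at hval
  simpa using hval.symm

lemma finrank_ker_comp {U W X : Type*} [AddCommGroup U] [Module ℂ U] [AddCommGroup W]
    [Module ℂ W] [AddCommGroup X] [Module ℂ X] [FiniteDimensional ℂ U] [FiniteDimensional ℂ W]
    (g : W →ₗ[ℂ] X) (f : U →ₗ[ℂ] W) :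
    Module.finrank ℂ (LinearMap.ker (g.comp f)) ≤
      Module.finrank ℂ (LinearMap.ker f) + Module.finrank ℂ (LinearMap.ker g) := by
  have hmem : ∀ x ∈ LinearMap.ker (g.comp f), f x ∈ LinearMap.ker g := fun x hx => by
    simpa [LinearMap.mem_ker] using hx
  set φ : LinearMap.ker (g.comp f) →ₗ[ℂ] LinearMap.ker g := f.restrict hmem with hφ
  have h1 := φ.finrank_range_add_finrank_ker
  have h2 : Module.finrank ℂ (LinearMap.range φ) ≤ Module.finrank ℂ (LinearMap.ker g) :=
    Submodule.finrank_le _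
  have h3 : Module.finrank ℂ (LinearMap.ker φ) ≤ Module.finrank ℂ (LinearMap.ker f) := by
    have hmem2 : ∀ x : LinearMap.ker φ, x.1.1 ∈ LinearMap.ker f := fun x => by
      have hx := x.2
      rw [LinearMap.mem_ker] at hx
      exact congrArg Subtype.val hx
    set ψ : LinearMap.ker φ →ₗ[ℂ] LinearMap.ker f :=
      LinearMap.codRestrict (LinearMap.ker f)
        ((LinearMap.ker (g.comp f)).subtype.comp (LinearMap.ker φ).subtype)
        (fun x => hmem2 x) with hψ
    have hinj : Function.Injective ⇑ψ := by
      intro a b hab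
      have h' := congrArg (fun z : LinearMap.ker f => (z : U)) hab
      apply Subtype.ext
      apply Subtype.ext
      exact h'
    exact LinearMap.finrank_le_finrank_of_injective hinj
  omega

noncomputable def Dchain (n : ℕ) (m' : Fin n → ℕ) (e : ℕ) : (t : ℕ) → (V n e →ₗ[ℂ] V n (e + t))
  | 0 => LinearMap.id
  | t+1 => (fMap n m' (e+t)).comp (Dchain n m' e t)

lemma finrank_ker_Dchain (n : ℕ) (m' : Fin n → ℕ) (e : ℕ) (t : ℕ) :
    Module.finrank ℂ (LinearMap.ker (Dchain n m' e t)) ≤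
      ∑ s ∈ Finset.range t, Module.finrank ℂ (LinearMap.ker (fMap n m' (e+s))) := by
  induction t with
  | zero =>
    simp [Dchain]
    exact finrank_bot ℂ _
  | succ t ih =>
    calc Module.finrank ℂ (LinearMap.ker (Dchain n m' e (t+1)))
        ≤ Module.finrank ℂ (LinearMap.ker (Dchain n m' e t))
          + Module.finrank ℂ (LinearMap.ker (fMap n m' (e+t))) :=
          finrank_ker_comp _ _
      _ ≤ _ := by rw [Finset.sum_range_succ]; omega

lemma proj_zero_of {n j : ℕ} (a a' : ℕ) (haa : a = a') {d d' : ℕ}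
    (pf : a + d = j) (pf' : a' + d' = j) {x : V (n+1) j}
    (hx : proj a pf x = 0) : proj a' pf' x = 0 := by
  subst haa
  exact proj_zero_congr pf pf' hx

lemma Dchain_proj {n j : ℕ} (m : Fin (n+1) → ℕ) (x : V (n+1) j)
    (hker : fMap (n+1) m j x = 0) (pf0 : m 0 + (j - m 0) = j) :
    ∀ t a (ha : a + t = m 0) (pf : a + ((j - m 0) + t) = j),
      ∃ c : ℂ, Dchain n (Fin.tail m) (j - m 0) t (proj (m 0) pf0 x) = c • proj a pf x := by
  intro t
  induction t with
  | zero =>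
    intro a ha pf
    refine ⟨1, ?_⟩
    rw [one_smul]
    show proj (m 0) pf0 x = proj a pf x
    exact DFunLike.congr_fun (proj_congr_left (by omega) pf0 pf) x
  | succ t ih =>
    intro a ha pf
    have pf3 : (a+1) + ((j - m 0) + t) = j := by omega
    obtain ⟨c, hc⟩ := ih (a+1) (by omega) pf3
    have hkey := DFunLike.congr_fun (key1 m j a ((j - m 0) + t) (by omega) pf pf3) x
    rw [LinearMap.comp_apply, hker, map_zero, LinearMap.add_apply, LinearMap.smul_apply,
      LinearMap.comp_apply] at hkey
    refine ⟨c * (-(((a:ℂ)+1) * ((m 0 : ℂ) - (a:ℂ)))), ?_⟩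
    show fMap n (Fin.tail m) ((j - m 0) + t)
      (Dchain n (Fin.tail m) (j - m 0) t (proj (m 0) pf0 x)) = _
    rw [hc, map_smul]
    have h4 : fMap n (Fin.tail m) ((j - m 0) + t) (proj (a+1) pf3 x)
        = -((((a:ℂ)+1) * ((m 0 : ℂ) - (a:ℂ))) • proj a pf x) :=
      (add_eq_zero_iff_neg_eq.mp hkey.symm).symm
    rw [h4, smul_neg, smul_smul, ← neg_smul, mul_neg]

lemma Dchain_ker_image {n j : ℕ} (m : Fin (n+1) → ℕ) (x : V (n+1) j)
    (hker : fMap (n+1) m j x = 0) (hm0 : m 0 ≤ j) (pf0 : m 0 + (j - m 0) = j) :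
    Dchain n (Fin.tail m) (j - m 0) (m 0 + 1) (proj (m 0) pf0 x) = 0 := by
  have pf : 0 + ((j - m 0) + m 0) = j := by omega
  obtain ⟨c, hc⟩ := Dchain_proj m x hker pf0 (m 0) 0 (by omega) pf
  show fMap n (Fin.tail m) ((j - m 0) + m 0)
    (Dchain n (Fin.tail m) (j - m 0) (m 0) (proj (m 0) pf0 x)) = 0
  rw [hc, map_smul]
  have hkey := DFunLike.congr_fun
    (key0 m j ((j - m 0) + m 0) (by omega) pf) x
  rw [LinearMap.comp_apply, LinearMap.comp_apply, hker, map_zero] at hkey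
  rw [← hkey, smul_zero]

lemma coef_ne_zero {a b : ℕ} (hab : a ≠ b) : (((a:ℂ)+1) * ((b : ℂ) - (a:ℂ))) ≠ 0 := by
  apply mul_ne_zero
  · exact Nat.cast_add_one_ne_zero a
  · rw [sub_ne_zero]
    exact fun hc => hab (Nat.cast_injective hc).symm

lemma ker_proj_zero {n j : ℕ} (m : Fin (n+1) → ℕ) (x : V (n+1) j)
    (hker : fMap (n+1) m j x = 0) (hm0 : m 0 ≤ j) (pf0 : m 0 + (j - m 0) = j)
    (h0 : proj (m 0) pf0 x = 0) : x = 0 := by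
  have main : ∀ s (pf : (j - s) + (j - (j - s)) = j), proj (j - s) pf x = 0 := by
    intro s
    induction s with
    | zero =>
      intro pf
      by_cases hsm : j = m 0
      · exact proj_zero_of (m 0) (j - 0) (by omega) pf0 pf h0
      · have hkey := DFunLike.congr_fun (keyTop m j rfl rfl) x
        rw [LinearMap.comp_apply, hker, map_zero, LinearMap.smul_apply] at hkey
        rcases smul_eq_zero.mp hkey.symm with hcz | hp
        · exact absurd hcz (coef_ne_zero hsm)
        · exact proj_zero_of j (j - 0) (by omega) _ pf hp
    | succ s ih =>
      intro pf
      by_cases hsm : j - (s+1) = m 0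
      · exact proj_zero_of (m 0) (j - (s+1)) hsm.symm pf0 pf h0
      · by_cases hjs : j ≤ s
        · exact proj_zero_of (j - s) (j - (s+1)) (by omega)
            (show (j - s) + (j - (j - s)) = j by omega) pf (ih _)
        · set a := j - (s+1) with hadef
          have h₂ : a + ((j - a - 1) + 1) = j := by omega
          have h₃ : (a+1) + (j - a - 1) = j := by omega
          have hkey := DFunLike.congr_fun (key1 m j a (j - a - 1) (by omega) h₂ h₃) x
          rw [LinearMap.comp_apply, hker, map_zero, LinearMap.add_apply, LinearMap.smul_apply,
            LinearMap.comp_apply] at hkey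
          have hz : proj (a+1) h₃ x = 0 :=
            proj_zero_of (j - s) (a+1) (by omega)
              (show (j - s) + (j - (j - s)) = j by omega) h₃ (ih _)
          rw [hz, map_zero, add_zero] at hkey
          rcases smul_eq_zero.mp hkey.symm with hcz | hp
          · exact absurd hcz (coef_ne_zero hsm)
          · exact proj_zero_of a (j - (s+1)) rfl h₂ pf hp
  apply eq_zero_of_proj
  intro a pf
  exact proj_zero_of (j - (j - a)) a (by omega)
    (show (j - (j - a)) + (j - (j - (j - a))) = j by omega) pf (main _ _)


/-- If `0 ≤ m_1 < k` and `p = k − m_1`, then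
`dim ker f_{k,m} ≤ ∑_{q=p}^{k} dim ker f_{q,m^1}`, where `m^1 = (m_2,…,m_n)`. -/
theorem kernel_dim_le_sum_tail (n k : ℕ) (hn : 1 ≤ n) (hk : 1 ≤ k)
    (m : Fin (n + 1) → ℕ) (hm : m 0 < k) :
    Module.finrank ℂ (LinearMap.ker (fMap (n + 1) m (k - 1)))
      ≤ ∑ q ∈ Finset.Icc (k - m 0) k,
          Module.finrank ℂ (LinearMap.ker (fMap n (Fin.tail m) (q - 1))) := by
  obtain ⟨j, rfl⟩ : ∃ j, k = j + 1 := ⟨k - 1, by omega⟩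
  show Module.finrank ℂ (LinearMap.ker (fMap (n + 1) m j))
      ≤ ∑ q ∈ Finset.Icc (j + 1 - m 0) (j + 1),
          Module.finrank ℂ (LinearMap.ker (fMap n (Fin.tail m) (q - 1)))
  have hm0 : m 0 ≤ j := by omega
  have pf0 : m 0 + (j - m 0) = j := by omega
  have step1 : Module.finrank ℂ (LinearMap.ker (fMap (n+1) m j)) ≤
      Module.finrank ℂ (LinearMap.ker (Dchain n (Fin.tail m) (j - m 0) (m 0 + 1))) := by
    have hmem : ∀ x ∈ LinearMap.ker (fMap (n+1) m j),
        proj (m 0) pf0 x ∈ LinearMap.ker (Dchain n (Fin.tail m) (j - m 0) (m 0 + 1)) := by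
      intro x hx
      rw [LinearMap.mem_ker] at hx ⊢
      exact Dchain_ker_image m x hx hm0 pf0
    apply LinearMap.finrank_le_finrank_of_injective
      (f := (proj (m 0) pf0).restrict hmem)
    intro a b hab
    apply Subtype.ext
    have hsub : a.1 - b.1 ∈ LinearMap.ker (fMap (n+1) m j) := sub_mem a.2 b.2
    have h2 : proj (m 0) pf0 a.1 = proj (m 0) pf0 b.1 := congrArg Subtype.val hab
    have hps : proj (m 0) pf0 (a.1 - b.1) = 0 := by
      rw [map_sub, h2, sub_self]
    have hz := ker_proj_zero m (a.1 - b.1) (by rwa [LinearMap.mem_ker] at hsub) hm0 pf0 hps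
    exact sub_eq_zero.mp hz
  refine le_trans step1 (le_trans (finrank_ker_Dchain n (Fin.tail m) (j - m 0) (m 0 + 1)) ?_)
  apply le_of_eq
  apply Finset.sum_nbij' (i := fun s => (j + 1 - m 0) + s) (j := fun q => q - (j + 1 - m 0))
  · intro a ha
    simp only [Finset.mem_range] at ha
    simp only [Finset.mem_Icc]
    omega
  · intro a ha
    simp only [Finset.mem_Icc] at ha
    simp only [Finset.mem_range]
    omega
  · intro a _
    omega
  · intro a ha
    simp only [Finset.mem_Icc] at ha
    omega
  · intro a ha
    simp only [Finset.mem_range] at ha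
    rw [show (j + 1 - m 0) + a - 1 = (j - m 0) + a by omega]
end

section
/- Suppose n ≥ 2 and m_1 = 0. Then every element of ker f_{k,m} is supported on basis vectors e_J with j_1 = 0, and dim ker f_{k,m} = dim ker f_{k,m^1}, where f_{k,m^1} : V'_{k−1} → V'_k is the analogous map built from the (n−1)-tuple m^1 = (m_2,…,m_n). -/
open Finsupp

lemma fMap_apply (n : ℕ) (m : Fin n → ℕ) (j : ℕ) (v : V n j) (K : MIdx n (j+1)) :
    fMap n m j v K = ∑ J ∈ v.support, v J *
      ∑ i, if incr J.1 i = K.1 then ((J.1 i : ℂ) + 1) * ((m i : ℂ) - (J.1 i : ℂ)) else 0 := by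
  rw [fMap, Finsupp.lift_apply, Finsupp.sum_apply, Finsupp.sum]
  refine Finset.sum_congr rfl fun J _ => ?_
  rw [Finsupp.smul_apply, Finset.sum_apply', smul_eq_mul]
  congr 1
  refine Finset.sum_congr rfl fun i _ => ?_
  rw [Finsupp.smul_apply, Finsupp.single_apply, smul_eq_mul]
  by_cases h : incr J.1 i = K.1
  · rw [if_pos h, if_pos (by exact Subtype.ext h), mul_one]
  · rw [if_neg h, if_neg (fun e => h (congrArg Subtype.val e)), mul_zero]

lemma incr_self {n : ℕ} (J : Fin n → ℕ) (i : Fin n) : incr J i i = J i + 1 :=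
  Function.update_self _ _ _

lemma incr_ne {n : ℕ} (J : Fin n → ℕ) {i x : Fin n} (h : x ≠ i) : incr J i x = J x :=
  Function.update_of_ne h _ _

lemma ker_supported (n j : ℕ) (m : Fin (n+1) → ℕ) (hm : m 0 = 0) (v : V (n+1) j)
    (hv : fMap (n+1) m j v = 0) : ∀ J : MIdx (n+1) j, J.1 0 ≠ 0 → v J = 0 := by
  by_contra hc
  push_neg at hc
  obtain ⟨J₀, hJ₀0, hJ₀v⟩ := hc
  set S := v.support.filter (fun J => J.1 0 ≠ 0) with hS
  have hSne : S.Nonempty := ⟨J₀, Finset.mem_filter.2 ⟨Finsupp.mem_support_iff.2 hJ₀v, hJ₀0⟩⟩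
  obtain ⟨J, hJS, hJmax⟩ := Finset.exists_max_image S (fun J => J.1 0) hSne
  rw [Finset.mem_filter] at hJS
  obtain ⟨hJsupp, hJ0⟩ := hJS
  have hKsum : ∑ x, incr J.1 0 x = j + 1 := by rw [sum_incr, J.2]
  set K : MIdx (n+1) (j+1) := ⟨incr J.1 0, hKsum⟩ with hK
  have hKv : (K.1 : Fin (n+1) → ℕ) = incr J.1 0 := rfl
  have h0 : fMap (n+1) m j v K = 0 := by rw [hv]; rfl
  rw [fMap_apply] at h0
  rw [Finset.sum_eq_single_of_mem J hJsupp] at h0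
  · rw [Finset.sum_eq_single_of_mem (0 : Fin (n+1)) (Finset.mem_univ _)] at h0
    · rw [if_pos rfl, hm] at h0
      have hJv : v J ≠ 0 := Finsupp.mem_support_iff.1 hJsupp
      have h1 : ((J.1 0 : ℂ) + 1) ≠ 0 := by
        intro h
        have h2 : ((J.1 0 + 1 : ℕ) : ℂ) = 0 := by push_cast; linear_combination h
        have := Nat.cast_eq_zero.1 h2
        omega
      have h2 : (((0 : ℕ) : ℂ) - (J.1 0 : ℂ)) ≠ 0 := by
        rw [Nat.cast_zero, zero_sub, neg_ne_zero]
        exact Nat.cast_ne_zero.2 hJ0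
      rcases mul_eq_zero.1 h0 with h | h
      · exact hJv h
      · rcases mul_eq_zero.1 h with h | h
        · exact h1 h
        · exact h2 h
    · intro i _ hi
      rw [if_neg]
      intro he
      rw [hKv] at he
      have := congrFun he i
      rw [incr_self, incr_ne J.1 hi] at this
      omega
  · intro J' hJ' hne
    have hz : (∑ i, if incr J'.1 i = K.1 then
        ((J'.1 i : ℂ) + 1) * ((m i : ℂ) - (J'.1 i : ℂ)) else 0) = 0 := by
      refine Finset.sum_eq_zero fun i _ => ?_
      rw [if_neg]
      intro he
      rw [hKv] at he
      by_cases hi : i = 0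
      · subst hi
        apply hne
        refine Subtype.ext (funext fun x => ?_)
        by_cases hx : x = 0
        · subst hx
          have := congrFun he 0
          rw [incr_self, incr_self] at this
          omega
        · have := congrFun he x
          rwa [incr_ne J'.1 hx, incr_ne J.1 hx] at this
      · have h1 : J'.1 0 = J.1 0 + 1 := by
          have := congrFun he 0
          rwa [incr_ne J'.1 (Ne.symm hi), incr_self] at this
        have hmem : J' ∈ S := Finset.mem_filter.2 ⟨hJ', by omega⟩
        have := hJmax J' hmem
        omega
    rw [hz, mul_zero]

/-- Embedding of multiindices: prepend a zero. -/
def emb (n j : ℕ) (J : MIdx n j) : MIdx (n+1) j :=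
  ⟨Fin.cons 0 J.1, by rw [Fin.sum_univ_succ]; simp [J.2]⟩

lemma emb_injective (n j : ℕ) : Function.Injective (emb n j) := by
  intro a b h
  have := congrArg Subtype.val h
  exact Subtype.ext (by
    funext x
    have := congrFun this x.succ
    simpa [emb] using this)

lemma mem_range_emb (n j : ℕ) (K : MIdx (n+1) j) (h : K.1 0 = 0) :
    K ∈ Set.range (emb n j) := by
  refine ⟨⟨Fin.tail K.1, ?_⟩, ?_⟩
  · have := K.2
    rw [Fin.sum_univ_succ, h, zero_add] at this
    exact this
  · refine Subtype.ext ?_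
    show Fin.cons 0 (Fin.tail K.1) = K.1
    rw [← h]
    exact Fin.cons_self_tail K.1

lemma incr_cons {n : ℕ} (J : Fin n → ℕ) (i : Fin n) :
    incr (Fin.cons 0 J) i.succ = Fin.cons 0 (incr J i) := by
  funext x
  refine Fin.cases ?_ (fun y => ?_) x
  · rw [incr_ne _ (Fin.succ_ne_zero i).symm]
    simp
  · by_cases hy : y = i
    · subst hy
      rw [incr_self, Fin.cons_succ, Fin.cons_succ, incr_self]
    · rw [incr_ne _ (fun h => hy (Fin.succ_injective _ h)), Fin.cons_succ, Fin.cons_succ,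
        incr_ne _ hy]

lemma fMap_comm (n j : ℕ) (m : Fin (n+1) → ℕ) (hm : m 0 = 0) :
    fMap (n+1) m j ∘ₗ Finsupp.lmapDomain ℂ ℂ (emb n j)
      = Finsupp.lmapDomain ℂ ℂ (emb n (j+1)) ∘ₗ fMap n (Fin.tail m) j := by
  refine Finsupp.lhom_ext fun J c => ?_
  simp only [LinearMap.comp_apply, Finsupp.lmapDomain_apply, Finsupp.mapDomain_single]
  rw [fMap, fMap, Finsupp.lift_apply, Finsupp.lift_apply,
    Finsupp.sum_single_index (by simp), Finsupp.sum_single_index (by simp)]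
  rw [Finsupp.mapDomain_smul, Finsupp.mapDomain_finset_sum]
  rw [Fin.sum_univ_succ]
  have h0 : (((emb n j J).1 0 : ℂ) + 1) * ((m 0 : ℂ) - ((emb n j J).1 0 : ℂ)) = 0 := by
    rw [show (emb n j J).1 0 = 0 from rfl, hm]
    norm_num
  rw [h0, zero_smul, zero_add]
  congr 1
  refine Finset.sum_congr rfl fun i _ => ?_
  rw [Finsupp.mapDomain_smul, Finsupp.mapDomain_single]
  have hc : (emb n j J).1 i.succ = J.1 i := by simp [emb]
  rw [hc]
  have hmt : m i.succ = Fin.tail m i := rfl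
  rw [hmt]
  congr 1
  refine congrArg (fun K => Finsupp.single K (1:ℂ)) ?_
  exact Subtype.ext (incr_cons J.1 i)

/-- If `m_1 = 0`, then every element of `ker f_{k,m}` is supported on basis vectors `e_J`
with `j_1 = 0`, and `dim ker f_{k,m} = dim ker f_{k,m^1}` with `m^1 = (m_2,…,m_n)`. -/
theorem kernel_first_weight_zero (n k : ℕ) (hn : 1 ≤ n) (hk : 1 ≤ k)
    (m : Fin (n + 1) → ℕ) (hm : m 0 = 0) :
    (∀ v ∈ LinearMap.ker (fMap (n + 1) m (k - 1)),
      ∀ J : MIdx (n + 1) (k - 1), J.1 0 ≠ 0 → v J = 0) ∧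
    Module.finrank ℂ (LinearMap.ker (fMap (n + 1) m (k - 1)))
      = Module.finrank ℂ (LinearMap.ker (fMap n (Fin.tail m) (k - 1))) := by
  have hpart1 : ∀ v ∈ LinearMap.ker (fMap (n + 1) m (k - 1)),
      ∀ J : MIdx (n + 1) (k - 1), J.1 0 ≠ 0 → v J = 0 :=
    fun v hv => ker_supported n (k-1) m hm v (LinearMap.mem_ker.1 hv)
  refine ⟨hpart1, ?_⟩
  set E₁ : V n (k-1) →ₗ[ℂ] V (n+1) (k-1) := Finsupp.lmapDomain ℂ ℂ (emb n (k-1)) with hE₁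
  set E₂ : V n (k-1+1) →ₗ[ℂ] V (n+1) (k-1+1) := Finsupp.lmapDomain ℂ ℂ (emb n (k-1+1)) with hE₂
  have hE₂inj : Function.Injective E₂ := Finsupp.mapDomain_injective (emb_injective _ _)
  have hcomm : ∀ v, fMap (n+1) m (k-1) (E₁ v) = E₂ (fMap n (Fin.tail m) (k-1) v) :=
    fun v => LinearMap.congr_fun (fMap_comm n (k-1) m hm) v
  set R₁ : V (n+1) (k-1) →ₗ[ℂ] V n (k-1) :=
    Finsupp.lcomapDomain _ (emb_injective n (k-1)) with hR₁
  have hRE : ∀ v : V n (k-1), R₁ (E₁ v) = v := by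
    intro v
    apply Finsupp.mapDomain_injective (emb_injective n (k-1))
    refine Finsupp.mapDomain_comapDomain _ (emb_injective _ _) _ ?_
    intro K hK
    have := Finsupp.mapDomain_support hK
    rcases Finset.mem_image.1 this with ⟨J, _, hJ⟩
    exact ⟨J, hJ⟩
  have hER : ∀ x : V (n+1) (k-1), (∀ J, J.1 0 ≠ 0 → x J = 0) → E₁ (R₁ x) = x := by
    intro x hx
    refine Finsupp.mapDomain_comapDomain _ (emb_injective _ _) x ?_
    intro K hK
    refine mem_range_emb n (k-1) K ?_
    by_contra h
    exact (Finsupp.mem_support_iff.1 hK) (hx K h)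
  have hker : ∀ x : V (n+1) (k-1), x ∈ LinearMap.ker (fMap (n+1) m (k-1)) →
      R₁ x ∈ LinearMap.ker (fMap n (Fin.tail m) (k-1)) := by
    intro x hx
    rw [LinearMap.mem_ker]
    apply hE₂inj
    rw [← hcomm, hER x (hpart1 x hx), map_zero]
    exact LinearMap.mem_ker.1 hx
  let e : LinearMap.ker (fMap n (Fin.tail m) (k-1)) ≃ₗ[ℂ]
      LinearMap.ker (fMap (n+1) m (k-1)) :=
  { toFun := fun v => ⟨E₁ v.1, by
      rw [LinearMap.mem_ker, hcomm, LinearMap.mem_ker.1 v.2, map_zero]⟩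
    map_add' := fun a b => Subtype.ext (map_add E₁ _ _)
    map_smul' := fun c a => Subtype.ext (map_smul E₁ c _)
    invFun := fun x => ⟨R₁ x.1, hker x.1 x.2⟩
    left_inv := fun v => Subtype.ext (hRE v.1)
    right_inv := fun x => Subtype.ext (hER x.1 (hpart1 x.1 x.2)) }
  exact (LinearEquiv.finrank_eq e).symm
end

section
/- Suppose |m| − k + 1 = k or |m| − k + 1 < 0 (i.e., |m| = 2k − 1 or |m| < k − 1). Then for any pairwise distinct complex numbers z_1,…,z_n, the master function Φ_{k,n}(t;z,m) has no critical points in X: for every t ∈ X there exists an index i, 1 ≤ i ≤ k, such that −Σ_{j=1}^n m_j/(t_i − z_j) + Σ_{q ≠ i} 2/(t_i − t_q) ≠ 0. -/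
open Polynomial Finset

noncomputable def uP {k : ℕ} (t : Fin k → ℂ) (i : Fin k) : Polynomial ℂ :=
  ∏ q ∈ Finset.univ.erase i, (X - C (t q))

lemma derivative_finset_prod {ι : Type*} [DecidableEq ι] (s : Finset ι) (f : ι → Polynomial ℂ) :
    Polynomial.derivative (∏ i ∈ s, f i)
      = ∑ i ∈ s, (∏ j ∈ s.erase i, f j) * Polynomial.derivative (f i) := by
  classical
  induction s using Finset.induction_on with
  | empty => simp
  | @insert a s hxa ih =>
    rw [Finset.prod_insert hxa, derivative_mul, ih, Finset.sum_insert hxa,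
      Finset.erase_insert hxa, mul_comm (derivative (f a)), Finset.mul_sum]
    congr 1
    refine Finset.sum_congr rfl fun i hi => ?_
    rw [Finset.erase_insert_of_ne (show a ≠ i from fun h => hxa (by rw [h]; exact hi)),
      Finset.prod_insert (fun h => hxa (Finset.mem_of_mem_erase h)), mul_assoc]

lemma uP_monic {k : ℕ} (t : Fin k → ℂ) (i : Fin k) : (uP t i).Monic :=
  monic_prod_of_monic _ _ fun q _ => monic_X_sub_C _

lemma uP_natDegree {k : ℕ} (t : Fin k → ℂ) (i : Fin k) : (uP t i).natDegree = k - 1 := by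
  rw [uP, natDegree_prod_of_monic _ _ fun q _ => monic_X_sub_C _]
  simp [Finset.card_erase_of_mem]

lemma uP_eval {k : ℕ} (t : Fin k → ℂ) (i : Fin k) (x : ℂ) :
    (uP t i).eval x = ∏ q ∈ Finset.univ.erase i, (x - t q) := by
  simp [uP, eval_prod]

lemma uP_eval_ne {k : ℕ} {t : Fin k → ℂ} (ht : ∀ p q : Fin k, p ≠ q → t p ≠ t q) (i : Fin k) :
    (uP t i).eval (t i) ≠ 0 := by
  rw [uP_eval]
  refine Finset.prod_ne_zero_iff.2 fun q hq => sub_ne_zero.2 (ht i q ?_)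
  exact fun h => (Finset.mem_erase.1 hq).1 h.symm

lemma uP_eval_zero {k : ℕ} (t : Fin k → ℂ) {i j : Fin k} (hij : i ≠ j) :
    (uP t i).eval (t j) = 0 := by
  rw [uP_eval]
  exact Finset.prod_eq_zero (Finset.mem_erase.2 ⟨fun h => hij h.symm, Finset.mem_univ _⟩)
    (by simp)

lemma hermite_top_coeff (k : ℕ) (hk : 1 ≤ k) (t : Fin k → ℂ)
    (ht : ∀ p q : Fin k, p ≠ q → t p ≠ t q) (F : Polynomial ℂ)
    (hF : F.natDegree ≤ 2 * k - 1) :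
    F.coeff (2 * k - 1) =
      ∑ i, (F.derivative.eval (t i) * (uP t i).eval (t i)
            - 2 * F.eval (t i) * (uP t i).derivative.eval (t i))
          / ((uP t i).eval (t i)) ^ 3 := by
  classical
  have hdne : ∀ i, (uP t i).eval (t i) ≠ 0 := fun i => uP_eval_ne ht i
  set α : Fin k → ℂ := fun i => F.eval (t i) / ((uP t i).eval (t i)) ^ 2 with hα
  set β : Fin k → ℂ := fun i =>
    (F.derivative.eval (t i) * ((uP t i).eval (t i))
        - 2 * F.eval (t i) * (uP t i).derivative.eval (t i))
      / ((uP t i).eval (t i)) ^ 3 with hβ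
  set G : Polynomial ℂ :=
    F - ∑ i, (C (α i) * (uP t i) ^ 2 + C (β i) * ((X - C (t i)) * (uP t i) ^ 2)) with hG
  have hGeval : ∀ j, G.eval (t j) = 0 := by
    intro j
    rw [hG, eval_sub, eval_finset_sum,
      Finset.sum_eq_single_of_mem j (Finset.mem_univ j) (fun b _ hb => by
        simp [eval_add, eval_mul, eval_pow, uP_eval_zero t hb])]
    simp only [eval_add, eval_mul, eval_pow, eval_C, eval_sub, eval_X, sub_self, zero_mul,
      mul_zero, add_zero]
    simp only [hα]
    field_simp [hdne j]
    ring
  have hGder : ∀ j, G.derivative.eval (t j) = 0 := by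
    intro j
    rw [hG, derivative_sub, map_sum, eval_sub, eval_finset_sum,
      Finset.sum_eq_single_of_mem j (Finset.mem_univ j) (fun b _ hb => by
        rw [derivative_add, derivative_C_mul, derivative_C_mul, derivative_mul,
          derivative_pow, derivative_sub, derivative_X, derivative_C]
        simp [eval_add, eval_mul, eval_pow, uP_eval_zero t hb])]
    rw [derivative_add, derivative_C_mul, derivative_C_mul, derivative_mul,
      derivative_pow, derivative_sub, derivative_X, derivative_C]
    simp only [eval_add, eval_mul, eval_pow, eval_C, eval_sub, eval_X, sub_self, sub_zero,
      eval_one, Nat.cast_ofNat, eval_ofNat, pow_one, zero_mul, mul_zero, add_zero, one_mul,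
      zero_add]
    simp only [hα, hβ]
    field_simp [hdne j]
    ring
  have hdvd : (∏ j, (X - C (t j)) ^ 2) ∣ G := by
    apply Finset.prod_dvd_of_coprime
    · intro a _ b hb hab
      exact (Polynomial.isCoprime_X_sub_C_of_isUnit_sub
        ((sub_ne_zero.2 (ht a b hab)).isUnit)).pow
    · intro j _
      obtain ⟨Q, hQ⟩ := Polynomial.dvd_iff_isRoot.2 (hGeval j)
      have hQ0 : Q.eval (t j) = 0 := by
        have h := hGder j
        rw [hQ, derivative_mul, derivative_sub, derivative_X, derivative_C] at h
        simpa using h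
      obtain ⟨Q', hQ'⟩ := Polynomial.dvd_iff_isRoot.2 hQ0
      exact ⟨Q', by rw [hQ, hQ']; ring⟩
  have hGzero : G = 0 := by
    by_contra h
    have h2k : (∏ j : Fin k, (X - C (t j)) ^ 2).natDegree = 2 * k := by
      rw [natDegree_prod_of_monic _ _ (fun j _ => (monic_X_sub_C _).pow 2)]
      simp [natDegree_pow, mul_comm]
    have hle := Polynomial.natDegree_le_of_dvd hdvd h
    have hGdeg : G.natDegree ≤ 2 * k - 1 := by
      rw [hG]
      refine le_trans (natDegree_sub_le _ _) (max_le hF ?_)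
      refine le_trans (natDegree_sum_le _ _) ?_
      rw [Finset.fold_max_le]
      refine ⟨by omega, fun i _ => ?_⟩
      refine le_trans (natDegree_add_le _ _) (max_le ?_ ?_)
      · refine le_trans (natDegree_mul_le) ?_
        simp only [natDegree_C, natDegree_pow, uP_natDegree, zero_add]
        omega
      · refine le_trans (natDegree_mul_le) ?_
        refine le_trans (Nat.add_le_add_left (natDegree_mul_le) _) ?_
        simp only [natDegree_C, natDegree_pow, uP_natDegree, natDegree_X_sub_C, zero_add]
        omega
    omega
  have hFsum : F = ∑ i, (C (α i) * (uP t i) ^ 2 + C (β i) * ((X - C (t i)) * (uP t i) ^ 2)) :=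
    sub_eq_zero.1 hGzero
  rw [hFsum, finset_sum_coeff]
  refine Finset.sum_congr rfl fun i _ => ?_
  rw [coeff_add, coeff_C_mul, coeff_C_mul]
  have h1 : ((uP t i) ^ 2).coeff (2 * k - 1) = 0 := by
    apply coeff_eq_zero_of_natDegree_lt
    rw [natDegree_pow, uP_natDegree]
    omega
  have hmono : ((X - C (t i)) * (uP t i) ^ 2).Monic :=
    (monic_X_sub_C _).mul ((uP_monic t i).pow 2)
  have h2 : ((X - C (t i)) * (uP t i) ^ 2).coeff (2 * k - 1) = 1 := by
    have hdeg : ((X - C (t i)) * (uP t i) ^ 2).natDegree = 2 * k - 1 := by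
      rw [(monic_X_sub_C _).natDegree_mul ((uP_monic t i).pow 2), natDegree_X_sub_C,
        natDegree_pow, uP_natDegree]
      omega
    rw [← hdeg]
    exact hmono.coeff_natDegree
  rw [h1, h2, mul_zero, mul_one, zero_add]

/-- If `|m| − k + 1 = k` or `|m| − k + 1 < 0`, then for any pairwise distinct
`z_1,…,z_n`, the master function `Φ_{k,n}(t;z,m)` has no critical points in the
complement `X` of the discriminantal arrangement: at every point `t ∈ X` some
logarithmic partial derivative `−∑ⱼ mⱼ/(tᵢ−zⱼ) + ∑_{q≠i} 2/(tᵢ−t_q)` is nonzero. -/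
theorem master_function_no_critical_points (k n : ℕ) (hk : 1 ≤ k) (hn : 1 ≤ n)
    (m : Fin n → ℕ)
    (hm : (∑ j, (m j : ℤ)) - k + 1 = k ∨ (∑ j, (m j : ℤ)) - k + 1 < 0)
    (z : Fin n → ℂ) (hz : ∀ j j', j ≠ j' → z j ≠ z j')
    (t : Fin k → ℂ) (ht1 : ∀ i j, t i ≠ z j) (ht2 : ∀ p q, p ≠ q → t p ≠ t q) :
    ∃ i : Fin k,
      -(∑ j, (m j : ℂ) / (t i - z j)) + ∑ q ∈ Finset.univ.erase i, 2 / (t i - t q) ≠ 0 := by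
  classical
  by_contra hcon
  push_neg at hcon
  have hcrit : ∀ i : Fin k,
      (∑ j, (m j : ℂ) / (t i - z j)) = ∑ q ∈ Finset.univ.erase i, 2 / (t i - t q) := by
    intro i
    linear_combination -(hcon i)
  set M : ℕ := ∑ j, m j with hM
  set T : Polynomial ℂ := ∏ j, (X - C (z j)) ^ (m j) with hT
  have hTmonic : T.Monic := monic_prod_of_monic _ _ fun j _ => (monic_X_sub_C _).pow _
  have hTdeg : T.natDegree = M := by
    rw [hT, natDegree_prod_of_monic _ _ fun j _ => (monic_X_sub_C _).pow _]
    simp [natDegree_pow]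
    exact hM.symm
  have hTne : ∀ i, T.eval (t i) ≠ 0 := by
    intro i
    rw [hT, eval_prod]
    refine Finset.prod_ne_zero_iff.2 fun j _ => ?_
    simp only [eval_pow, eval_sub, eval_X, eval_C]
    exact pow_ne_zero _ (sub_ne_zero.2 (ht1 i j))
  have hdne : ∀ i, (uP t i).eval (t i) ≠ 0 := fun i => uP_eval_ne ht2 i
  -- logarithmic derivative of T at t i
  have hT' : ∀ i, T.derivative.eval (t i)
      = T.eval (t i) * ∑ j, (m j : ℂ) / (t i - z j) := by
    intro i
    rw [hT, derivative_finset_prod, eval_finset_sum, eval_prod, Finset.mul_sum]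
    refine Finset.sum_congr rfl fun j _ => ?_
    rw [eval_mul, eval_prod, derivative_pow, derivative_sub, derivative_X, derivative_C,
      sub_zero, mul_one, eval_mul, eval_C, eval_pow, eval_sub, eval_X, eval_C]
    rcases Nat.eq_zero_or_pos (m j) with h0 | hpos
    · simp [h0]
    · have hne : t i - z j ≠ 0 := sub_ne_zero.2 (ht1 i j)
      rw [← Finset.mul_prod_erase _ _ (Finset.mem_univ j)]
      simp only [eval_pow, eval_sub, eval_X, eval_C]
      field_simp
      rw [show (∏ x ∈ Finset.univ.erase j, (t i - z x) ^ m x)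
            * (m j : ℂ) * (t i - z j) * (t i - z j) ^ (m j - 1)
          = (m j : ℂ) * ((t i - z j) ^ (m j - 1) * (t i - z j))
            * (∏ x ∈ Finset.univ.erase j, (t i - z x) ^ m x) from by ring,
        ← pow_succ, Nat.sub_add_cancel hpos]
      ring
  -- logarithmic derivative of uP at t i
  have hu' : ∀ i, (uP t i).derivative.eval (t i)
      = (uP t i).eval (t i) * ∑ q ∈ Finset.univ.erase i, 1 / (t i - t q) := by
    intro i
    rw [uP, derivative_finset_prod, eval_finset_sum, eval_prod, Finset.mul_sum]
    refine Finset.sum_congr rfl fun q hq => ?_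
    have hqi : q ≠ i := (Finset.mem_erase.1 hq).1
    have hne : t i - t q ≠ 0 := sub_ne_zero.2 (ht2 i q fun h => hqi (by simp [h]) )
    rw [eval_mul, eval_prod, derivative_sub, derivative_X, derivative_C, sub_zero, eval_one,
      mul_one, ← Finset.mul_prod_erase _ _ hq]
    simp only [eval_sub, eval_X, eval_C]
    field_simp
  have hkey : ∀ i, T.derivative.eval (t i) * (uP t i).eval (t i)
      - 2 * T.eval (t i) * (uP t i).derivative.eval (t i) = 0 := by
    intro i
    have h2 : (∑ q ∈ Finset.univ.erase i, (2 : ℂ) / (t i - t q))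
        = 2 * ∑ q ∈ Finset.univ.erase i, 1 / (t i - t q) := by
      rw [Finset.mul_sum]; exact Finset.sum_congr rfl fun q _ => by ring
    rw [hT' i, hu' i, hcrit i, h2]
    ring
  rcases hm with hm1 | hm2
  · -- |m| = 2k - 1
    have hMk : M = 2 * k - 1 := by
      have : (M : ℤ) = ∑ j, (m j : ℤ) := by rw [hM]; push_cast; ring
      omega
    have h1 : T.coeff (2 * k - 1) = 1 := by
      have : T.natDegree = 2 * k - 1 := by rw [hTdeg, hMk]
      rw [← this]; exact hTmonic.coeff_natDegree
    have h0 : T.coeff (2 * k - 1) = 0 := by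
      rw [hermite_top_coeff k hk t ht2 T (by rw [hTdeg, hMk])]
      refine Finset.sum_eq_zero fun i _ => ?_
      rw [hkey i, zero_div]
    rw [h1] at h0
    exact one_ne_zero h0
  · -- |m| < k - 1
    have hMk : M + 1 < k := by
      have : (M : ℤ) = ∑ j, (m j : ℤ) := by rw [hM]; push_cast; ring
      omega
    have key : ∀ r, r < k →
        ∑ i, t i ^ r * (T.eval (t i) / ((uP t i).eval (t i)) ^ 2) = 0 := by
      intro r hr
      have hdegF : (X ^ (r + 1) * T).natDegree ≤ 2 * k - 2 := by
        refine le_trans (natDegree_mul_le) ?_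
        rw [natDegree_X_pow, hTdeg]
        omega
      have hcoeff : (X ^ (r + 1) * T).coeff (2 * k - 1) = 0 :=
        coeff_eq_zero_of_natDegree_lt (by omega)
      rw [hermite_top_coeff k hk t ht2 _ (by omega)] at hcoeff
      have hterm : ∀ i : Fin k,
          ((X ^ (r + 1) * T).derivative.eval (t i) * (uP t i).eval (t i)
            - 2 * (X ^ (r + 1) * T).eval (t i) * (uP t i).derivative.eval (t i))
            / ((uP t i).eval (t i)) ^ 3
          = ((r : ℂ) + 1) * (t i ^ r * (T.eval (t i) / ((uP t i).eval (t i)) ^ 2)) := by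
        intro i
        have hev : (X ^ (r + 1) * T).derivative.eval (t i)
            = ((r : ℂ) + 1) * t i ^ r * T.eval (t i)
              + t i ^ (r + 1) * T.derivative.eval (t i) := by
          rw [derivative_mul, derivative_X_pow, eval_add, eval_mul, eval_mul, eval_mul,
            eval_C, eval_pow, eval_X, eval_pow, eval_X]
          push_cast
          ring
        have hnum : (X ^ (r + 1) * T).derivative.eval (t i) * (uP t i).eval (t i)
            - 2 * (X ^ (r + 1) * T).eval (t i) * (uP t i).derivative.eval (t i)
            = ((r : ℂ) + 1) * t i ^ r * T.eval (t i) * (uP t i).eval (t i) := by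
          rw [hev, eval_mul, eval_pow, eval_X]
          linear_combination (t i ^ (r + 1)) * hkey i
        have hdd : ∀ a : ℂ, a * (uP t i).eval (t i) / ((uP t i).eval (t i)) ^ 3
            = a / ((uP t i).eval (t i)) ^ 2 := by
          intro a
          rw [pow_succ, mul_div_mul_right _ _ (hdne i)]
        rw [hnum, hdd]
        ring
      rw [Finset.sum_congr rfl fun i _ => hterm i, ← Finset.mul_sum] at hcoeff
      have hr1 : ((r : ℂ) + 1) ≠ 0 := by
        have h9 : ((r + 1 : ℕ) : ℂ) ≠ 0 := Nat.cast_ne_zero.2 (Nat.succ_ne_zero r)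
        push_cast at h9
        exact h9
      exact (mul_eq_zero.1 hcoeff).resolve_left hr1
    -- Vandermonde step
    set c : Fin k → ℂ := fun i => T.eval (t i) / ((uP t i).eval (t i)) ^ 2 with hc
    have hcj : ∀ j : Fin k, c j * ((uP t j).eval (t j)) = 0 := by
      intro j
      have hsum : ∑ i, c i * (uP t j).eval (t i) = 0 := by
        have hev : ∀ i : Fin k, (uP t j).eval (t i)
            = ∑ s ∈ Finset.range k, (uP t j).coeff s * (t i) ^ s := fun i =>
          eval_eq_sum_range' (by rw [uP_natDegree]; omega) _
        calc ∑ i, c i * (uP t j).eval (t i)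
            = ∑ i, ∑ s ∈ Finset.range k, (uP t j).coeff s * (t i ^ s * c i) := by
              refine Finset.sum_congr rfl fun i _ => ?_
              rw [hev i, Finset.mul_sum]
              exact Finset.sum_congr rfl fun s _ => by ring
          _ = ∑ s ∈ Finset.range k, (uP t j).coeff s * ∑ i, t i ^ s * c i := by
              rw [Finset.sum_comm]
              exact Finset.sum_congr rfl fun s _ => by rw [Finset.mul_sum]
          _ = 0 := by
              refine Finset.sum_eq_zero fun s hs => ?_
              rw [key s (Finset.mem_range.1 hs), mul_zero]
      rw [← hsum]
      rw [Finset.sum_eq_single_of_mem j (Finset.mem_univ j) (fun i _ hij => by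
        rw [uP_eval_zero t (fun h => hij h.symm), mul_zero])]
    have hj : c ⟨0, hk⟩ = 0 := by
      have := hcj ⟨0, hk⟩
      exact (mul_eq_zero.1 this).resolve_right (hdne _)
    rw [hc] at hj
    exact hTne _ ((div_eq_zero_iff.1 hj).resolve_right (pow_ne_zero _ (hdne _)))
end
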